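/- Let **A** = Σ_{γ=1}^N B^γ ⊗ A^γ ∈ ℝ^{Nn×Nn}_s satisfy the structural hypothesis (SH), and assume in addition that all the positive definite matrices A¹,…,A^N have the same smallest eigenvalue λ₁ and admit a common unit eigenvector ā with A^γ ā = λ₁ ā for all γ. Then the ellipticity constant of **A** satisfies ν(**A**) = ( min_{γ=1,…,N} min_{|a|=1} A^γ:a⊗a ) · min_{|η|=1} (B¹+⋯+B^N) : η⊗η = λ₁ · λ₁(B¹+⋯+B^N). -/

import Mathlib

open MeasureTheory Filter Topology
open scoped BigOperators

noncomputable section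

/-- `Euc n` is the Euclidean space `ℝⁿ`. -/
abbrev Euc (n : ℕ) : Type := EuclideanSpace ℝ (Fin n)

/-- Squared Euclidean norm of a finite vector. -/
def vsq {m : ℕ} (v : Fin m → ℝ) : ℝ := ∑ i, (v i) ^ 2

/-- Squared Euclidean norm of a third order tensor `X ∈ ℝ^{N×n×n}`. -/
def tsq {N n : ℕ} (X : Fin N → Fin n → Fin n → ℝ) : ℝ :=
  ∑ α, ∑ i, ∑ j, (X α i j) ^ 2

/-- First partial derivative `D_i f`. -/
def pder {n : ℕ} (f : Euc n → ℝ) (i : Fin n) (x : Euc n) : ℝ :=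
  fderiv ℝ f x (EuclideanSpace.single i 1)

/-- Second partial derivative `D²_{ij} f`. -/
def pder2 {n : ℕ} (f : Euc n → ℝ) (i j : Fin n) (x : Euc n) : ℝ :=
  pder (fun y => pder f j y) i x

/-- Hessian tensor `D²u(x) ∈ ℝ^{Nn²}` of a vector valued map `u : ℝⁿ → ℝ^N`. -/
def Hess {n N : ℕ} (u : Euc n → Fin N → ℝ) (x : Euc n) : Fin N → Fin n → Fin n → ℝ :=
  fun α i j => pder2 (fun y => u y α) i j x

/-- The contraction `(𝐀:X)_α = Σ_{i,β,j} A_{αiβj} X_{βij}`. -/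
def AC {n N : ℕ} (A : Fin N → Fin n → Fin N → Fin n → ℝ)
    (X : Fin N → Fin n → Fin n → ℝ) : Fin N → ℝ :=
  fun α => ∑ i, ∑ β, ∑ j, A α i β j * X β i j

/-- The quadratic form `𝐀 : η⊗a⊗η⊗a = Σ A_{αiβj} η_α a_i η_β a_j`. -/
def QF {n N : ℕ} (A : Fin N → Fin n → Fin N → Fin n → ℝ)
    (η : Fin N → ℝ) (a : Fin n → ℝ) : ℝ :=
  ∑ α, ∑ i, ∑ β, ∑ j, A α i β j * η α * a i * η β * a j

/-- Symmetry `A_{αiβj} = A_{βjαi}` of a fourth order tensor (i.e. `𝐀 ∈ ℝ^{Nn×Nn}_s`). -/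
def SymT {n N : ℕ} (A : Fin N → Fin n → Fin N → Fin n → ℝ) : Prop :=
  ∀ α i β j, A α i β j = A β j α i

/-- Symmetry `X_{αij} = X_{αji}`, i.e. `X ∈ ℝ^{Nn²}_s`. -/
def SymX {n N : ℕ} (X : Fin N → Fin n → Fin n → ℝ) : Prop :=
  ∀ α i j, X α i j = X α j i

/-- `𝐀` is rank-one positive: `𝐀:η⊗a⊗η⊗a ≥ ν |η|²|a|²` for some `ν > 0`. -/
def RankOnePos {n N : ℕ} (A : Fin N → Fin n → Fin N → Fin n → ℝ) : Prop :=
  ∃ ν > (0:ℝ), ∀ (η : Fin N → ℝ) (a : Fin n → ℝ), ν * vsq η * vsq a ≤ QF A η a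

/-- The ellipticity constant `ν(𝐀) = min_{|η|=|a|=1} 𝐀:η⊗a⊗η⊗a`. -/
def nuA {n N : ℕ} (A : Fin N → Fin n → Fin N → Fin n → ℝ) : ℝ :=
  sInf {v | ∃ (η : Fin N → ℝ) (a : Fin n → ℝ), vsq η = 1 ∧ vsq a = 1 ∧ v = QF A η a}

/-- The smallest eigenvalue `λ₁(M) = min_{|a|=1} M:a⊗a` of a symmetric matrix. -/
def lam1 {m : ℕ} (M : Matrix (Fin m) (Fin m) ℝ) : ℝ :=
  sInf {v | ∃ a : Fin m → ℝ, vsq a = 1 ∧ v = ∑ i, ∑ j, M i j * a i * a j}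

/-- The structural hypothesis (SH) for `𝐀` with the decomposition data
`𝐀 = Σ_γ B^γ ⊗ A^γ` given explicitly. -/
def SHdata {n N : ℕ} (A : Fin N → Fin n → Fin N → Fin n → ℝ)
    (B : Fin N → Matrix (Fin N) (Fin N) ℝ)
    (M : Fin N → Matrix (Fin n) (Fin n) ℝ) : Prop :=
  (∀ γ, (B γ).IsSymm) ∧ (∀ γ, (M γ).IsSymm) ∧
  (∀ α i β j, A α i β j = ∑ γ, B γ α β * M γ i j) ∧
  (∀ γ δ, γ ≠ δ → ∀ y z : Fin N → ℝ, ∑ α, (B γ).mulVec y α * (B δ).mulVec z α = 0) ∧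
  (∑ γ, B γ).PosDef ∧ (∀ γ, (M γ).PosDef) ∧
  (∃ a : Fin n → ℝ, a ≠ 0 ∧ ∀ γ, (M γ).mulVec a = lam1 (M γ) • a)

/-- The structural hypothesis (SH). -/
def SH {n N : ℕ} (A : Fin N → Fin n → Fin N → Fin n → ℝ) : Prop :=
  ∃ B M, SHdata A B M

/-- `Ω` is a (bounded) domain with `C²` boundary, encoded via a `C²` defining function
with nonvanishing gradient on the boundary. -/
def IsC2Domain {n : ℕ} (Ω : Set (Euc n)) : Prop :=
  ∃ ρ : Euc n → ℝ, ContDiff ℝ 2 ρ ∧ Ω = {x | ρ x < 0} ∧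
    ∀ x ∈ frontier Ω, fderiv ℝ ρ x ≠ 0

/-- `F : Ω × ℝ^{Nn²}_s → ℝ^N` is a Carathéodory map: measurable in `x`, continuous in `X`. -/
def Caratheodory {n N : ℕ} (Ω : Set (Euc n))
    (F : Euc n → (Fin N → Fin n → Fin n → ℝ) → Fin N → ℝ) : Prop :=
  (∀ X, Measurable fun x => F x X) ∧
  (∀ᵐ x ∂(volume.restrict Ω), Continuous fun X => F x X)

/-- The K-condition (ellipticity) for `F` with data `(𝐀, α, β, γ)`. -/
def KCond {n N : ℕ} (Ω : Set (Euc n))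
    (F : Euc n → (Fin N → Fin n → Fin n → ℝ) → Fin N → ℝ)
    (A : Fin N → Fin n → Fin N → Fin n → ℝ)
    (al : Euc n → ℝ) (β γ : ℝ) : Prop :=
  SymT A ∧ RankOnePos A ∧ Measurable al ∧
  (∃ C : ℝ, ∀ᵐ x ∂(volume.restrict Ω), |al x| ≤ C) ∧
  (∀ᵐ x ∂(volume.restrict Ω), 0 < al x) ∧
  (∃ C : ℝ, ∀ᵐ x ∂(volume.restrict Ω), |1 / al x| ≤ C) ∧
  0 < β ∧ 0 < γ ∧ β + γ < 1 ∧
  (∀ᵐ x ∂(volume.restrict Ω), ∀ X Z : Fin N → Fin n → Fin n → ℝ, SymX X → SymX Z →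
    Real.sqrt (vsq fun α => AC A Z α - al x * (F x (X + Z) α - F x X α)) ≤
      β * nuA A * Real.sqrt (tsq Z) + γ * Real.sqrt (vsq (AC A Z)))

/-- Membership `u ∈ (H² ∩ H¹₀)(Ω)^N` (as a strong/classical object): twice
differentiable on `Ω`, with `u`, `Du`, `D²u` square integrable on `Ω`, and zero
boundary trace. -/
structure IsH2H10 {n N : ℕ} (Ω : Set (Euc n)) (u : Euc n → Fin N → ℝ) : Prop where
  contDiffOn : ∀ α, ContDiffOn ℝ 2 (fun x => u x α) Ω
  memL2 : IntegrableOn (fun x => vsq (u x)) Ω volume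
  grad_memL2 : IntegrableOn (fun x => ∑ α, ∑ i, (pder (fun y => u y α) i x) ^ 2) Ω volume
  hess_memL2 : IntegrableOn (fun x => tsq (Hess u x)) Ω volume
  zero_trace : ∀ x ∈ frontier Ω, Tendsto u (nhdsWithin x Ω) (nhds 0)

/-- The `L²(Ω)^N` norm of a vector valued map. -/
def L2V {n N : ℕ} (Ω : Set (Euc n)) (g : Euc n → Fin N → ℝ) : ℝ :=
  Real.sqrt (∫ x in Ω, vsq (g x))

/-- The `L²(Ω)` norm of a tensor valued map. -/
def L2T {n N : ℕ} (Ω : Set (Euc n)) (G : Euc n → Fin N → Fin n → Fin n → ℝ) : ℝ :=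
  Real.sqrt (∫ x in Ω, tsq (G x))

/-- The `H²(Ω)^N` norm `‖u‖_{L²} + ‖Du‖_{L²} + ‖D²u‖_{L²}`. -/
def H2norm {n N : ℕ} (Ω : Set (Euc n)) (u : Euc n → Fin N → ℝ) : ℝ :=
  L2V Ω u + Real.sqrt (∫ x in Ω, ∑ α, ∑ i, (pder (fun y => u y α) i x) ^ 2) +
    L2T Ω (fun x => Hess u x)

end


private lemma quad_eq_dot {m : ℕ} (M : Matrix (Fin m) (Fin m) ℝ) (v : Fin m → ℝ) :
    ∑ i, ∑ j, M i j * v i * v j = dotProduct v (M.mulVec v) := by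
  simp only [dotProduct, Matrix.mulVec, Finset.mul_sum]
  exact Finset.sum_congr rfl fun i _ => Finset.sum_congr rfl fun j _ => by ring

private lemma vsq_eq_dot {m : ℕ} (v : Fin m → ℝ) : vsq v = dotProduct v v := by
  simp [vsq, dotProduct, sq]

private lemma ne_zero_of_vsq {m : ℕ} {v : Fin m → ℝ} (h : vsq v = 1) : v ≠ 0 := by
  intro h0; rw [h0] at h; simp [vsq] at h

private lemma vsq_single {m : ℕ} (i : Fin m) : vsq (Pi.single i (1:ℝ)) = 1 := by
  simp [vsq, Pi.single_apply]

private lemma lam1_le {m : ℕ} {M : Matrix (Fin m) (Fin m) ℝ} (hM : M.PosDef)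
    {a : Fin m → ℝ} (ha : vsq a = 1) : lam1 M ≤ ∑ i, ∑ j, M i j * a i * a j := by
  apply csInf_le
  · refine ⟨0, ?_⟩
    rintro v ⟨b, hb, rfl⟩
    rw [quad_eq_dot]
    exact le_of_lt (by simpa using hM.dotProduct_mulVec_pos (ne_zero_of_vsq hb))
  · exact ⟨a, ha, rfl⟩

private lemma sum_comm3 {A B C : Type*} [Fintype A] [Fintype B] [Fintype C] (f : C → A → B → ℝ) :
    ∑ c, ∑ a, ∑ b, f c a b = ∑ a, ∑ b, ∑ c, f c a b := by
  rw [Finset.sum_comm]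
  exact Finset.sum_congr rfl fun a _ => Finset.sum_comm

private lemma sum_comm5 {N n : ℕ} (f : Fin N → Fin n → Fin N → Fin n → Fin N → ℝ) :
    ∑ α, ∑ i, ∑ β, ∑ j, ∑ γ, f α i β j γ = ∑ γ, ∑ α, ∑ i, ∑ β, ∑ j, f α i β j γ := by
  calc ∑ α, ∑ i, ∑ β, ∑ j, ∑ γ, f α i β j γ
      = ∑ α, ∑ i, ∑ β, ∑ γ, ∑ j, f α i β j γ :=
        Finset.sum_congr rfl fun α _ => Finset.sum_congr rfl fun i _ =>
          Finset.sum_congr rfl fun β _ => Finset.sum_comm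
    _ = ∑ α, ∑ i, ∑ γ, ∑ β, ∑ j, f α i β j γ :=
        Finset.sum_congr rfl fun α _ => Finset.sum_congr rfl fun i _ => Finset.sum_comm
    _ = ∑ α, ∑ γ, ∑ i, ∑ β, ∑ j, f α i β j γ :=
        Finset.sum_congr rfl fun α _ => Finset.sum_comm
    _ = ∑ γ, ∑ α, ∑ i, ∑ β, ∑ j, f α i β j γ := Finset.sum_comm


/-- If `𝐀 = Σ_γ B^γ ⊗ A^γ` satisfies (SH) and in addition all the
positive definite matrices `A¹,…,A^N` have the same smallest eigenvalue `λ₁` with a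
common unit eigenvector `ā`, then
`ν(𝐀) = (min_γ min_{|a|=1} A^γ:a⊗a) · min_{|η|=1}(B¹+⋯+B^N):η⊗η = λ₁·λ₁(B¹+⋯+B^N)`. -/
theorem ellipticity_constant_formula
    {n N : ℕ} (hn : 0 < n) (hN : 0 < N)
    (A : Fin N → Fin n → Fin N → Fin n → ℝ)
    (B : Fin N → Matrix (Fin N) (Fin N) ℝ)
    (M : Fin N → Matrix (Fin n) (Fin n) ℝ)
    (hSH : SHdata A B M)
    (l1 : ℝ) (hl1 : ∀ γ, lam1 (M γ) = l1)
    (abar : Fin n → ℝ) (habar : vsq abar = 1)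
    (heig : ∀ γ, (M γ).mulVec abar = l1 • abar) :
    nuA A =
      (Finset.univ.inf' ⟨⟨0, hN⟩, Finset.mem_univ _⟩ fun γ => lam1 (M γ)) *
        lam1 (∑ γ, B γ) ∧
    nuA A = l1 * lam1 (∑ γ, B γ) := by

  classical
  obtain ⟨hBsymm, hMsymm, hA, hOrth, hSpd, hMpd, -⟩ := hSH
  set S : Matrix (Fin N) (Fin N) ℝ := ∑ γ, B γ with hSdef
  have γ0 : Fin N := ⟨0, hN⟩
  have habar0 : abar ≠ 0 := ne_zero_of_vsq habar
  have hMabar : ∀ γ, ∑ i, ∑ j, M γ i j * abar i * abar j = l1 := by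
    intro γ
    rw [quad_eq_dot, heig γ, dotProduct_smul, ← vsq_eq_dot, habar]
    simp
  have hl1pos : 0 < l1 := by
    have h := (hMpd γ0).dotProduct_mulVec_pos habar0
    have h2 := hMabar γ0
    rw [quad_eq_dot] at h2
    calc (0:ℝ) < dotProduct abar ((M γ0).mulVec abar) := by simpa using h
      _ = l1 := h2
  have hBsymm' : ∀ γ (α β : Fin N), B γ α β = B γ β α := by
    intro γ α β
    have h : Matrix.transpose (B γ) β α = B γ β α := by rw [hBsymm γ]
    simpa [Matrix.transpose_apply] using h
  have hBB : ∀ γ δ, γ ≠ δ → B γ * B δ = 0 := by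
    intro γ δ hγδ
    ext α β
    have h := hOrth γ δ hγδ (Pi.single α 1) (Pi.single β 1)
    simp only [Matrix.mulVec_single_one, Matrix.col_apply, mul_one] at h
    rw [Matrix.mul_apply, Matrix.zero_apply]
    calc ∑ x, B γ α x * B δ x β = ∑ x, B γ x α * B δ x β :=
          Finset.sum_congr rfl fun x _ => by rw [hBsymm' γ α x]
      _ = 0 := h
  have hSB : ∀ γ, S * B γ = B γ * B γ := by
    intro γ
    rw [hSdef, Finset.sum_mul]
    rw [Finset.sum_eq_single γ]
    · intro δ _ hδ; exact hBB δ γ hδ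
    · intro h; exact absurd (Finset.mem_univ γ) h
  have hBS : ∀ γ, B γ * S = B γ * B γ := by
    intro γ
    rw [hSdef, Finset.mul_sum]
    rw [Finset.sum_eq_single γ]
    · intro δ _ hδ; exact hBB γ δ (fun h => hδ h.symm)
    · intro h; exact absurd (Finset.mem_univ γ) h
  have hdet : IsUnit S.det := isUnit_iff_ne_zero.mpr (ne_of_gt hSpd.det_pos)
  have hproj : ∀ γ, B γ * S⁻¹ * B γ = B γ := by
    intro γ
    have hcomm : B γ * S⁻¹ = S⁻¹ * B γ := by
      have h1 : S⁻¹ * (S * B γ) * S⁻¹ = S⁻¹ * (B γ * S) * S⁻¹ := by rw [hSB, hBS]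
      calc B γ * S⁻¹ = (S⁻¹ * S) * (B γ * S⁻¹) := by
            rw [Matrix.nonsing_inv_mul S hdet, one_mul]
        _ = S⁻¹ * (S * B γ) * S⁻¹ := by simp only [mul_assoc]
        _ = S⁻¹ * (B γ * S) * S⁻¹ := h1
        _ = S⁻¹ * B γ * (S * S⁻¹) := by simp only [mul_assoc]
        _ = S⁻¹ * B γ := by rw [Matrix.mul_nonsing_inv S hdet, mul_one]
    calc B γ * S⁻¹ * B γ = S⁻¹ * B γ * B γ := by rw [hcomm]
      _ = S⁻¹ * (S * B γ) := by rw [mul_assoc, ← hSB γ]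
      _ = B γ := by rw [← mul_assoc, Matrix.nonsing_inv_mul S hdet, one_mul]
  have hqB : ∀ γ (η : Fin N → ℝ), 0 ≤ ∑ α, ∑ β, B γ α β * η α * η β := by
    intro γ η
    rw [quad_eq_dot, ← hproj γ]
    rw [← Matrix.mulVec_mulVec, ← Matrix.mulVec_mulVec]
    rw [Matrix.dotProduct_mulVec]
    have hv : Matrix.vecMul η (B γ) = (B γ).mulVec η := by
      funext i
      simp only [Matrix.vecMul, Matrix.mulVec, dotProduct]
      exact Finset.sum_congr rfl fun x _ => by rw [hBsymm' γ x i]; ring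
    rw [hv]
    simpa using hSpd.inv.posSemidef.dotProduct_mulVec_nonneg ((B γ).mulVec η)
  have hqM : ∀ γ (a : Fin n → ℝ), vsq a = 1 → l1 ≤ ∑ i, ∑ j, M γ i j * a i * a j := by
    intro γ a ha
    rw [← hl1 γ]
    exact lam1_le (hMpd γ) ha
  have hQF : ∀ (η : Fin N → ℝ) (a : Fin n → ℝ), QF A η a =
      ∑ γ, (∑ α, ∑ β, B γ α β * η α * η β) * (∑ i, ∑ j, M γ i j * a i * a j) := by
    intro η a
    unfold QF
    have hterm : ∀ α i β j, A α i β j * η α * a i * η β * a j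
        = ∑ γ, (B γ α β * η α * η β) * (M γ i j * a i * a j) := by
      intro α i β j
      rw [hA, Finset.sum_mul, Finset.sum_mul, Finset.sum_mul, Finset.sum_mul]
      exact Finset.sum_congr rfl fun γ _ => by ring
    simp only [hterm]
    rw [sum_comm5]
    refine Finset.sum_congr rfl fun γ _ => ?_
    calc ∑ α, ∑ i, ∑ β, ∑ j, (B γ α β * η α * η β) * (M γ i j * a i * a j)
        = ∑ α, ∑ β, ∑ i, ∑ j, (B γ α β * η α * η β) * (M γ i j * a i * a j) :=
          Finset.sum_congr rfl fun α _ => Finset.sum_comm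
      _ = (∑ α, ∑ β, B γ α β * η α * η β) * (∑ i, ∑ j, M γ i j * a i * a j) := by
          simp only [← Finset.mul_sum, ← Finset.sum_mul]
  have hsumB : ∀ (η : Fin N → ℝ),
      ∑ γ, (∑ α, ∑ β, B γ α β * η α * η β) = ∑ α, ∑ β, S α β * η α * η β := by
    intro η
    rw [sum_comm3 (fun γ α β => B γ α β * η α * η β)]
    refine Finset.sum_congr rfl fun α _ => Finset.sum_congr rfl fun β _ => ?_
    rw [hSdef]
    simp only [Matrix.sum_apply, Finset.sum_mul]
  have hnu : nuA A = sInf {v | ∃ (η : Fin N → ℝ) (a : Fin n → ℝ),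
      vsq η = 1 ∧ vsq a = 1 ∧ v = QF A η a} := rfl
  have hlow : ∀ v ∈ {v | ∃ (η : Fin N → ℝ) (a : Fin n → ℝ),
      vsq η = 1 ∧ vsq a = 1 ∧ v = QF A η a}, l1 * lam1 S ≤ v := by
    rintro v ⟨η, a, hη, ha, rfl⟩
    rw [hQF]
    calc l1 * lam1 S ≤ l1 * (∑ α, ∑ β, S α β * η α * η β) :=
        mul_le_mul_of_nonneg_left (lam1_le hSpd hη) hl1pos.le
      _ = ∑ γ, (∑ α, ∑ β, B γ α β * η α * η β) * l1 := by
          rw [← hsumB, Finset.mul_sum]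
          exact Finset.sum_congr rfl fun γ _ => mul_comm _ _
      _ ≤ ∑ γ, (∑ α, ∑ β, B γ α β * η α * η β) * (∑ i, ∑ j, M γ i j * a i * a j) :=
          Finset.sum_le_sum fun γ _ => mul_le_mul_of_nonneg_left (hqM γ a ha) (hqB γ η)
  have hne : Set.Nonempty {v | ∃ (η : Fin N → ℝ) (a : Fin n → ℝ),
      vsq η = 1 ∧ vsq a = 1 ∧ v = QF A η a} :=
    ⟨QF A (Pi.single γ0 1) abar, Pi.single γ0 1, abar, vsq_single γ0, habar, rfl⟩
  have hbdd : BddBelow {v | ∃ (η : Fin N → ℝ) (a : Fin n → ℝ),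
      vsq η = 1 ∧ vsq a = 1 ∧ v = QF A η a} := ⟨l1 * lam1 S, hlow⟩
  have hge : l1 * lam1 S ≤ nuA A := by rw [hnu]; exact le_csInf hne hlow
  have hle : nuA A ≤ l1 * lam1 S := by
    have hch : ∀ (η : Fin N → ℝ), vsq η = 1 →
        nuA A ≤ l1 * (∑ α, ∑ β, S α β * η α * η β) := by
      intro η hη
      have h1 : QF A η abar = l1 * (∑ α, ∑ β, S α β * η α * η β) := by
        rw [hQF, ← hsumB, Finset.mul_sum]
        exact Finset.sum_congr rfl fun γ _ => by rw [hMabar γ]; ring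
      calc nuA A ≤ QF A η abar := by
            rw [hnu]; exact csInf_le hbdd ⟨η, abar, hη, habar, rfl⟩
        _ = _ := h1
    have h2 : nuA A / l1 ≤ lam1 S := by
      unfold lam1
      apply le_csInf
      · exact ⟨_, Pi.single γ0 1, vsq_single γ0, rfl⟩
      rintro t ⟨η, hη, rfl⟩
      rw [div_le_iff₀ hl1pos]
      calc nuA A ≤ l1 * _ := hch η hη
        _ = _ * l1 := mul_comm _ _
    calc nuA A = (nuA A / l1) * l1 := by field_simp
      _ ≤ lam1 S * l1 := mul_le_mul_of_nonneg_right h2 hl1pos.le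
      _ = l1 * lam1 S := mul_comm _ _
  have hmain : nuA A = l1 * lam1 S := le_antisymm hle hge
  refine ⟨?_, hmain⟩
  rw [hmain]
  congr 1
  simp only [hl1]
  exact (Finset.inf'_const _ _).symm
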